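/- The Lie algebra g^(3) on ℝ^9 = ℝ^3 ⊕ ℝ^3 ⊕ ℝ^3 with bracket [(y,x,z),(y',x',z')] = (y∧y', y∧x' − y'∧x, y∧z' − y'∧z + x∧x') is not isomorphic to the semidirect product su(2) ⋉ (ℝ^3 ⊕ ℝ^3) with bracket [(y,x,z),(y',x',z')] = (y∧y', y∧x' − y'∧x, y∧z' − y'∧z); concretely, in g^(3) the derived subalgebra of the ideal I = {(0,x,z)} is nonzero, while in the semidirect product the corresponding ideal is abelian. -/

import Mathlib

open Matrix

noncomputable section

/-- The Lie bracket of `g^(3)`. -/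
def g3Bracket (u v : (Fin 3 → ℝ) × (Fin 3 → ℝ) × (Fin 3 → ℝ)) :
    (Fin 3 → ℝ) × (Fin 3 → ℝ) × (Fin 3 → ℝ) :=
  (u.1 ⨯₃ v.1,
   u.1 ⨯₃ v.2.1 - v.1 ⨯₃ u.2.1,
   u.1 ⨯₃ v.2.2 - v.1 ⨯₃ u.2.2 + u.2.1 ⨯₃ v.2.1)

/-- The bracket of the semidirect product `su(2) ⋉ (ℝ³ ⊕ ℝ³)`. -/
def sdBracket (u v : (Fin 3 → ℝ) × (Fin 3 → ℝ) × (Fin 3 → ℝ)) :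
    (Fin 3 → ℝ) × (Fin 3 → ℝ) × (Fin 3 → ℝ) :=
  (u.1 ⨯₃ v.1,
   u.1 ⨯₃ v.2.1 - v.1 ⨯₃ u.2.1,
   u.1 ⨯₃ v.2.2 - v.1 ⨯₃ u.2.2)


lemma zero_cross' (b : Fin 3 → ℝ) : (0 : Fin 3 → ℝ) ⨯₃ b = 0 := by
  simp [crossProduct]

lemma cross_zero' (a : Fin 3 → ℝ) : a ⨯₃ (0 : Fin 3 → ℝ) = 0 := by
  simp [crossProduct]

lemma g3_triple (u v : (Fin 3 → ℝ) × (Fin 3 → ℝ) × (Fin 3 → ℝ)) (h : u.1 = 0) :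
    g3Bracket u (g3Bracket u (g3Bracket u v)) = 0 := by
  simp [g3Bracket, h, zero_cross', cross_zero']

lemma sd_first_eq_zero (p : (Fin 3 → ℝ) × (Fin 3 → ℝ) × (Fin 3 → ℝ))
    (h : ∀ w, sdBracket p (sdBracket p (sdBracket p w)) = 0) : p.1 = 0 := by
  set a := p.1 with ha
  have key : ∀ b : Fin 3 → ℝ, a ⨯₃ (a ⨯₃ (a ⨯₃ b)) = 0 := by
    intro b
    have h0 := h (0, 0, b)
    have := congrArg (fun t => t.2.2) h0
    simpa [sdBracket, zero_cross', cross_zero'] using this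
  have e0 := key ![1,0,0]
  have e1 := key ![0,1,0]
  have q0 := congrFun e0 1
  have q1 := congrFun e0 2
  have q2 := congrFun e1 2
  simp [crossProduct] at q0 q1 q2
  have h0 : (a 0^2 + a 1^2 + a 2^2) * a 0 = 0 := by linear_combination -q2
  have h1 : (a 0^2 + a 1^2 + a 2^2) * a 1 = 0 := by linear_combination q1
  have h2 : (a 0^2 + a 1^2 + a 2^2) * a 2 = 0 := by linear_combination -q0
  have hsq : (a 0^2 + a 1^2 + a 2^2)^2 = 0 := by
    linear_combination a 0 * h0 + a 1 * h1 + a 2 * h2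
  have hs : a 0^2 + a 1^2 + a 2^2 = 0 := by
    have := pow_eq_zero_iff (n := 2) (by norm_num) |>.mp hsq
    exact this
  funext i
  fin_cases i <;> simp <;>
    [ (nlinarith [sq_nonneg (a 0), sq_nonneg (a 1), sq_nonneg (a 2), hs]);
      (nlinarith [sq_nonneg (a 0), sq_nonneg (a 1), sq_nonneg (a 2), hs]);
      (nlinarith [sq_nonneg (a 0), sq_nonneg (a 1), sq_nonneg (a 2), hs])]

lemma sd_ideal_abelian (u v : (Fin 3 → ℝ) × (Fin 3 → ℝ) × (Fin 3 → ℝ))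
    (hu : u.1 = 0) (hv : v.1 = 0) : sdBracket u v = 0 := by
  simp [sdBracket, hu, hv, zero_cross', cross_zero']

/-- `g^(3)` is not isomorphic to the semidirect product `su(2) ⋉ (ℝ³ ⊕ ℝ³)`:
no linear equivalence of `ℝ⁹` intertwines the two brackets.  Concretely, in
`g^(3)` the derived subalgebra of the ideal `I = {(0,x,z)}` is nonzero
(e.g. `[(0,x,0),(0,x',0)] = (0,0,x∧x')`), while in the semidirect product the
corresponding ideal is abelian. -/
theorem stmt19 :
    (¬ ∃ e : ((Fin 3 → ℝ) × (Fin 3 → ℝ) × (Fin 3 → ℝ)) ≃ₗ[ℝ]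
        ((Fin 3 → ℝ) × (Fin 3 → ℝ) × (Fin 3 → ℝ)),
      ∀ u v, e (g3Bracket u v) = sdBracket (e u) (e v)) ∧
    (∃ u v, u.1 = 0 ∧ v.1 = 0 ∧ g3Bracket u v ≠ 0) ∧
    (∀ x x' : Fin 3 → ℝ,
      g3Bracket (0, x, 0) (0, x', 0) = (0, 0, x ⨯₃ x')) ∧
    (∀ u v, u.1 = 0 → v.1 = 0 → sdBracket u v = 0) := by
  refine ⟨?_, ?_, ?_, sd_ideal_abelian⟩
  · rintro ⟨e, he⟩
    have himg : ∀ u : (Fin 3 → ℝ) × (Fin 3 → ℝ) × (Fin 3 → ℝ),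
        u.1 = 0 → (e u).1 = 0 := by
      intro u hu
      apply sd_first_eq_zero
      intro w
      have : sdBracket (e u) (sdBracket (e u) (sdBracket (e u) (e (e.symm w)))) =
          e (g3Bracket u (g3Bracket u (g3Bracket u (e.symm w)))) := by
        rw [he, he, he]
      rw [e.apply_symm_apply] at this
      rw [this, g3_triple u _ hu, map_zero]
    set u : (Fin 3 → ℝ) × (Fin 3 → ℝ) × (Fin 3 → ℝ) := (0, ![1,0,0], 0) with hu
    set v : (Fin 3 → ℝ) × (Fin 3 → ℝ) × (Fin 3 → ℝ) := (0, ![0,1,0], 0) with hv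
    have hne : g3Bracket u v ≠ 0 := by
      intro hc
      have := congrFun (congrArg (fun t => t.2.2) hc) 2
      simp [g3Bracket, crossProduct, hu, hv] at this
    have h1 : e (g3Bracket u v) = 0 := by
      rw [he]
      exact sd_ideal_abelian _ _ (himg u rfl) (himg v rfl)
    exact hne (by simpa using e.map_eq_zero_iff.mp h1)
  · refine ⟨(0, ![1,0,0], 0), (0, ![0,1,0], 0), rfl, rfl, ?_⟩
    intro hc
    have := congrFun (congrArg (fun t => t.2.2) hc) 2
    simp [g3Bracket, crossProduct] at this
  · intro x x'
    simp [g3Bracket, zero_cross', cross_zero']
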